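/- Let G = ⨁_{i ∈ ℕ} 𝔽_p be the direct sum of countably many copies of 𝔽_p with the bilinear form (a_i)·(b_i) = Σ_i a_i b_i. For any elements c, u_i, v_j, w_k ∈ G (finitely many), elements ε, ε_i ∈ 𝔽_p: if there exists x ∈ G with x·u_i = ε_i for all i, then there exists x ∈ G with x·u_i = ε_i for all i, x·x = ε, and x ≠ v_j for all j. -/

import Mathlib

/-- In `G = ⨁_{i ∈ ℕ} 𝔽_p` with the bilinear form `x · y = Σ_i x_i y_i`, any solvable
finite system of linear conditions `x · uᵢ = εᵢ` can be solved while also prescribing the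
value of `x · x` and avoiding finitely many prescribed elements. -/

private def dotF (p : ℕ) (x y : ℕ →₀ ZMod p) : ZMod p := x.sum fun n a => a * y n

private lemma dot_add_left {p : ℕ} (x y z : ℕ →₀ ZMod p) :
    dotF p (x + y) z = dotF p x z + dotF p y z :=
  Finsupp.sum_add_index' (by simp) (fun a b₁ b₂ => add_mul _ _ _)

private lemma dot_single_left {p : ℕ} (m : ℕ) (c : ZMod p) (z : ℕ →₀ ZMod p) :
    dotF p (Finsupp.single m c) z = c * z m :=
  Finsupp.sum_single_index (zero_mul _)

private lemma dot_add_right {p : ℕ} (x y z : ℕ →₀ ZMod p) :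
    dotF p x (y + z) = dotF p x y + dotF p x z := by
  unfold dotF
  simp [Finsupp.add_apply, mul_add, Finsupp.sum_add]

private lemma dot_single_right {p : ℕ} (x : ℕ →₀ ZMod p) (m : ℕ) (c : ZMod p) :
    dotF p x (Finsupp.single m c) = x m * c := by
  unfold dotF
  rw [Finsupp.sum]
  rw [Finset.sum_eq_single m]
  · simp
  · intro n _ hn; simp [Finsupp.single_apply, Ne.symm hn]
  · intro hm; simp [Finsupp.notMem_support_iff.mp hm]

theorem finsupp_dot_solution_adjustment
    (p : ℕ) [Fact p.Prime] (N q : ℕ)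
    (u : Fin N → (ℕ →₀ ZMod p)) (v : Fin q → (ℕ →₀ ZMod p))
    (ε : ZMod p) (εs : Fin N → ZMod p)
    (h : ∃ x : ℕ →₀ ZMod p, ∀ i, (x.sum fun n a => a * u i n) = εs i) :
    ∃ x : ℕ →₀ ZMod p,
      (∀ i, (x.sum fun n a => a * u i n) = εs i) ∧
      (x.sum fun n a => a * x n) = ε ∧
      ∀ j, x ≠ v j := by
  obtain ⟨x₀, hx₀⟩ := h
  -- fresh coordinates
  set S : Finset ℕ := x₀.support ∪
      (Finset.univ.biUnion fun i => (u i).support) ∪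
      (Finset.univ.biUnion fun j => (v j).support) with hS
  set n : ℕ := S.sup id + 1 with hn
  have fresh : ∀ m, n ≤ m → m ∉ S := by
    intro m hm hmem
    have : m ≤ S.sup id := Finset.le_sup (f := id) hmem
    omega
  have hx₀n : ∀ m, n ≤ m → x₀ m = 0 := fun m hm =>
    Finsupp.notMem_support_iff.mp fun hc => fresh m hm (by simp [hS, hc])
  have hun : ∀ i m, n ≤ m → u i m = 0 := by
    intro i m hm
    refine Finsupp.notMem_support_iff.mp fun hc => fresh m hm ?_
    simp only [hS, Finset.mem_union, Finset.mem_biUnion]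
    exact Or.inl (Or.inr ⟨i, Finset.mem_univ _, hc⟩)
  have hvn : ∀ j m, n ≤ m → v j m = 0 := by
    intro j m hm
    refine Finsupp.notMem_support_iff.mp fun hc => fresh m hm ?_
    simp only [hS, Finset.mem_union, Finset.mem_biUnion]
    exact Or.inr ⟨j, Finset.mem_univ _, hc⟩
  obtain ⟨b, c, hbc⟩ := ZMod.sq_add_sq p (ε - dotF p x₀ x₀ - 1)
  refine ⟨x₀ + Finsupp.single n 1 + Finsupp.single (n+1) b + Finsupp.single (n+2) c, ?_, ?_, ?_⟩
  · intro i
    show dotF p _ (u i) = _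
    rw [dot_add_left, dot_add_left, dot_add_left, dot_single_left, dot_single_left,
        dot_single_left, hun i n le_rfl, hun i (n+1) (by omega), hun i (n+2) (by omega)]
    simpa [dotF] using hx₀ i
  · show dotF p _ _ = _
    set x := x₀ + Finsupp.single n 1 + Finsupp.single (n+1) b + Finsupp.single (n+2) c with hx
    have hxn : x n = 1 := by
      simp [hx, Finsupp.add_apply, Finsupp.single_apply, hx₀n n le_rfl]
    have hxn1 : x (n+1) = b := by
      simp [hx, Finsupp.add_apply, Finsupp.single_apply, hx₀n (n+1) (by omega)]
    have hxn2 : x (n+2) = c := by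
      simp [hx, Finsupp.add_apply, Finsupp.single_apply, hx₀n (n+2) (by omega)]
    rw [hx, dot_add_left, dot_add_left, dot_add_left, dot_single_left, dot_single_left,
        dot_single_left, ← hx, hxn, hxn1, hxn2]
    rw [hx, dot_add_right, dot_add_right, dot_add_right, dot_single_right, dot_single_right,
        dot_single_right, hx₀n n le_rfl, hx₀n (n+1) (by omega), hx₀n (n+2) (by omega)]
    have := hbc
    ring_nf
    ring_nf at this
    linear_combination this
  · intro j hj
    have : v j n = 1 := by
      rw [← hj]
      simp [Finsupp.add_apply, Finsupp.single_apply, hx₀n n le_rfl]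
    rw [hvn j n le_rfl] at this
    exact one_ne_zero this.symm
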